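/- Let g_1, ..., g_m ∈ ℝ^n, let C ⊆ ℝ^n be convex, and define φ(d, λ) = Σ_{i=1}^m λ_i ⟨g_i, d⟩ + (1/2)‖d‖₂² for d ∈ ℝ^n, λ ∈ Δ^m. Suppose (d_k, λ_k) ∈ C × Δ^m is a saddle point of φ on C × Δ^m, i.e., φ(d_k, λ) ≤ φ(d_k, λ_k) ≤ φ(d, λ_k) for all d ∈ C and λ ∈ Δ^m. Let P ≤ S be integers, let γ_s > 0 and (d_s, λ_s) ∈ C × Δ^m for s = P, ..., S, and set Γ = Σ_{s=P}^S γ_s, d̄ = Γ^{-1} Σ_{s=P}^S γ_s d_s. Then (1/2)‖d_k − d̄‖₂² ≤ Γ^{-1} Σ_{s=P}^S γ_s (φ(d_s, λ_k) − φ(d_k, λ_s)). -/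

import Mathlib

open scoped RealInnerProductSpace

lemma convexOn_norm_sq' {E : Type*} [NormedAddCommGroup E] [InnerProductSpace ℝ E] :
    ConvexOn ℝ Set.univ (fun z : E => ‖z‖^2) := by
  refine ⟨convex_univ, ?_⟩
  intro x hx y hy a b ha hb hab
  have hx2 : ∀ z : E, ‖z‖^2 = ⟪z, z⟫ := fun z => (real_inner_self_eq_norm_sq z).symm
  have key : (0:ℝ) ≤ ⟪x, x⟫ - 2 * ⟪x, y⟫ + ⟪y, y⟫ := by
    have h1 := real_inner_self_nonneg (F := E) (x := x - y)
    have h2 : ⟪x - y, x - y⟫ = ⟪x, x⟫ - 2 * ⟪x, y⟫ + ⟪y, y⟫ := by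
      simp [inner_sub_sub_self, real_inner_comm x y]; linarith [norm_sub_sq_real x y]
    linarith [h2 ▸ h1]
  simp only [hx2, inner_add_add_self, inner_smul_left, inner_smul_right,
    RCLike.conj_to_real, real_inner_comm x y, smul_eq_mul]
  have hb1 : b = 1 - a := by linarith
  subst hb1
  nlinarith [mul_nonneg (mul_nonneg ha hb) key]

lemma strong_min' {E : Type*} [NormedAddCommGroup E] [InnerProductSpace ℝ E]
    {C : Set E} (hC : Convex ℝ C) (v : E) {x : E} (hx : x ∈ C)
    (hmin : ∀ z ∈ C, ⟪v, x⟫ + (1/2)*‖x‖^2 ≤ ⟪v, z⟫ + (1/2)*‖z‖^2)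
    {y : E} (hy : y ∈ C) :
    ⟪v, x⟫ + (1/2)*‖x‖^2 + (1/2)*‖y - x‖^2 ≤ ⟪v, y⟫ + (1/2)*‖y‖^2 := by
  set A : ℝ := ⟪v, y - x⟫ + ⟪x, y - x⟫ with hA
  set B : ℝ := ‖y - x‖^2 with hB
  have hB0 : 0 ≤ B := sq_nonneg _
  -- step 1 : for each t in (0,1], 0 ≤ A + (t/2)*B
  have step1 : ∀ t : ℝ, 0 < t → t ≤ 1 → 0 ≤ A + (t/2)*B := by
    intro t ht0 ht1
    have hz : x + t • (y - x) ∈ C := by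
      have := hC hx hy (by linarith : (0:ℝ) ≤ 1 - t) (le_of_lt ht0) (by ring)
      convert this using 1
      module
    have hm := hmin _ hz
    have hinner : ⟪v, x + t • (y - x)⟫ = ⟪v, x⟫ + t * ⟪v, y - x⟫ := by
      simp [inner_add_right, inner_smul_right]
    have hnorm : ‖x + t • (y - x)‖^2 = ‖x‖^2 + 2*t*⟪x, y - x⟫ + t^2*B := by
      rw [← real_inner_self_eq_norm_sq, ← real_inner_self_eq_norm_sq, hB,
        ← real_inner_self_eq_norm_sq]
      simp [inner_add_add_self, inner_smul_left, inner_smul_right, real_inner_comm]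
      rw [norm_add_sq_real, norm_smul, real_inner_smul_right, mul_pow, Real.norm_eq_abs, sq_abs]
      ring
    rw [hinner, hnorm] at hm
    have h2 : 0 ≤ t * (A + (t/2)*B) := by rw [hA]; nlinarith
    nlinarith [h2]
  have step2 : 0 ≤ A := by
    by_contra h
    push_neg at h
    rcases eq_or_lt_of_le hB0 with hB' | hB'
    · have := step1 1 one_pos le_rfl
      rw [← hB'] at this; linarith
    · have ht : 0 < min 1 (-A / B) := lt_min one_pos (div_pos (by linarith) hB')
      have h1 := step1 _ ht (min_le_left _ _)
      have hle : min 1 (-A / B) ≤ -A / B := min_le_right _ _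
      have h3 : (min 1 (-A / B) / 2) * B ≤ ((-A / B)/2) * B :=
        mul_le_mul_of_nonneg_right (by linarith) hB0
      have h4 : ((-A / B)/2) * B = -A/2 := by field_simp
      linarith
  -- step 3
  have hyy : ‖y‖^2 = ‖x‖^2 + 2*⟪x, y - x⟫ + B := by
    rw [← real_inner_self_eq_norm_sq, ← real_inner_self_eq_norm_sq, hB,
      ← real_inner_self_eq_norm_sq]
    simp [inner_sub_sub_self, inner_sub_left, inner_sub_right, real_inner_comm]
    linarith [norm_sub_sq_real y x, real_inner_comm x y]
  have hvy : ⟪v, y⟫ = ⟪v, x⟫ + ⟪v, y - x⟫ := by simp [inner_sub_right]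
  rw [hvy, hyy]
  rw [hA] at step2
  linarith

/-- Deterministic core of Theorem 4.1: if `(d_k, λ_k)` is a saddle point of the MGDA
Lagrangian `φ(d, λ) = Σ_i λ_i ⟨g i, d⟩ + (1/2)‖d‖²` on `C × Δ^m`, and `d̄` is the
`γ`-weighted average of points `d_s ∈ C`, `s = P, ..., S`, then
`(1/2)‖d_k - d̄‖² ≤ Γ⁻¹ Σ_s γ_s (φ(d_s, λ_k) - φ(d_k, λ_s))`. -/
theorem weighted_average_gap_bound
    {n m : ℕ}
    (g : Fin m → EuclideanSpace ℝ (Fin n))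
    (C : Set (EuclideanSpace ℝ (Fin n))) (hC : Convex ℝ C)
    (φ : EuclideanSpace ℝ (Fin n) → (Fin m → ℝ) → ℝ)
    (hφ : ∀ d lam, φ d lam = (∑ i, lam i * ⟪g i, d⟫) + (1 / 2) * ‖d‖ ^ 2)
    (dk : EuclideanSpace ℝ (Fin n)) (lamk : Fin m → ℝ)
    (hdk : dk ∈ C) (hlamk : lamk ∈ stdSimplex ℝ (Fin m))
    (hsaddle : ∀ d ∈ C, ∀ lam ∈ stdSimplex ℝ (Fin m),
      φ dk lam ≤ φ dk lamk ∧ φ dk lamk ≤ φ d lamk)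
    (P S : ℕ) (hPS : P ≤ S)
    (γ : ℕ → ℝ) (hγ : ∀ s ∈ Finset.Icc P S, 0 < γ s)
    (ds : ℕ → EuclideanSpace ℝ (Fin n)) (lams : ℕ → Fin m → ℝ)
    (hds : ∀ s ∈ Finset.Icc P S, ds s ∈ C)
    (hlams : ∀ s ∈ Finset.Icc P S, lams s ∈ stdSimplex ℝ (Fin m))
    (Γ : ℝ) (hΓ : Γ = ∑ s ∈ Finset.Icc P S, γ s)
    (dbar : EuclideanSpace ℝ (Fin n))
    (hdbar : dbar = Γ⁻¹ • ∑ s ∈ Finset.Icc P S, γ s • ds s) :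
    (1 / 2) * ‖dk - dbar‖ ^ 2 ≤
      Γ⁻¹ * ∑ s ∈ Finset.Icc P S, γ s * (φ (ds s) lamk - φ dk (lams s)) := by
  set T := Finset.Icc P S with hT
  have hTne : T.Nonempty := ⟨P, Finset.mem_Icc.2 ⟨le_rfl, hPS⟩⟩
  have hΓpos : 0 < Γ := hΓ ▸ Finset.sum_pos hγ hTne
  set w : ℕ → ℝ := fun s => Γ⁻¹ * γ s with hw
  have hw0 : ∀ s ∈ T, 0 ≤ w s := fun s hs => by
    have := hγ s hs; positivity
  have hw1 : ∑ s ∈ T, w s = 1 := by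
    rw [hw]
    rw [← Finset.mul_sum, ← hΓ, inv_mul_cancel₀ (ne_of_gt hΓpos)]
  -- rewrite φ · lamk using a single vector G
  set G : EuclideanSpace ℝ (Fin n) := ∑ i, lamk i • g i with hG
  have hφG : ∀ d, φ d lamk = ⟪G, d⟫ + (1/2) * ‖d‖^2 := by
    intro d
    rw [hφ, hG, sum_inner]
    simp [real_inner_smul_left, Finset.mul_sum, mul_assoc]
  -- per-step bound
  have key : ∀ s ∈ T, (1/2) * ‖ds s - dk‖^2 ≤ φ (ds s) lamk - φ dk (lams s) := by
    intro s hs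
    have h1 : φ dk (lams s) ≤ φ dk lamk :=
      (hsaddle dk hdk (lams s) (hlams s hs)).1
    have hmin : ∀ z ∈ C, ⟪G, dk⟫ + (1/2)*‖dk‖^2 ≤ ⟪G, z⟫ + (1/2)*‖z‖^2 := by
      intro z hz
      have := (hsaddle z hz lamk hlamk).2
      rwa [hφG dk, hφG z] at this
    have h2 := strong_min' hC G hdk hmin (hds s hs)
    rw [← hφG dk, ← hφG (ds s)] at h2
    linarith
  -- Jensen
  have hsum_eq : ∑ s ∈ T, w s • (ds s - dk) = dbar - dk := by
    have : ∑ s ∈ T, w s • (ds s - dk)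
        = (∑ s ∈ T, w s • ds s) - (∑ s ∈ T, w s) • dk := by
      rw [Finset.sum_smul, ← Finset.sum_sub_distrib]
      exact Finset.sum_congr rfl fun s hs => smul_sub _ _ _
    rw [this, hw1, one_smul, hdbar, Finset.smul_sum]
    congr 1
    exact Finset.sum_congr rfl fun s hs => (smul_smul _ _ _).symm
  have hjensen := convexOn_norm_sq'.map_sum_le (w := w) (p := fun s => ds s - dk)
      hw0 hw1 (fun s _ => Set.mem_univ _)
  rw [hsum_eq] at hjensen
  simp only [smul_eq_mul] at hjensen
  have hnorm : ‖dk - dbar‖^2 = ‖dbar - dk‖^2 := by rw [norm_sub_rev]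
  have step : (1/2) * ‖dbar - dk‖^2 ≤ ∑ s ∈ T, w s * ((1/2) * ‖ds s - dk‖^2) := by
    calc (1/2) * ‖dbar - dk‖^2 ≤ (1/2) * ∑ s ∈ T, w s * ‖ds s - dk‖^2 := by
          linarith [hjensen]
      _ = ∑ s ∈ T, w s * ((1/2) * ‖ds s - dk‖^2) := by
          rw [Finset.mul_sum]; exact Finset.sum_congr rfl fun s _ => by ring
  have step2 : ∑ s ∈ T, w s * ((1/2) * ‖ds s - dk‖^2)
      ≤ ∑ s ∈ T, w s * (φ (ds s) lamk - φ dk (lams s)) := by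
    apply Finset.sum_le_sum
    intro s hs
    exact mul_le_mul_of_nonneg_left (key s hs) (hw0 s hs)
  have heq : ∑ s ∈ T, w s * (φ (ds s) lamk - φ dk (lams s))
      = Γ⁻¹ * ∑ s ∈ T, γ s * (φ (ds s) lamk - φ dk (lams s)) := by
    rw [Finset.mul_sum]
    exact Finset.sum_congr rfl fun s _ => by rw [hw]; ring
  rw [hnorm]
  linarith [step, step2, heq ▸ step2]
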